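/- The Cholesky factorization map, sending a positive definite symmetric matrix A ∈ ℝ^{k×k} to the unique upper triangular matrix R with positive diagonal entries such that A = R^T R, is continuous on the set of positive definite matrices. -/

import Mathlib

open Matrix Filter Topology

attribute [local instance] Matrix.normedAddCommGroup Matrix.normedSpace

lemma cholesky_unique {k : ℕ} (R S : Matrix (Fin k) (Fin k) ℝ)
    (hR : R.BlockTriangular id) (hS : S.BlockTriangular id)
    (hRd : ∀ i, 0 < R i i) (hSd : ∀ i, 0 < S i i)
    (h : Rᵀ * R = Sᵀ * S) : R = S := by
  have hSdet : S.det ≠ 0 := by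
    rw [det_of_upperTriangular hS]
    exact (Finset.prod_pos fun i _ => hSd i).ne'
  haveI : Invertible S := S.invertibleOfIsUnitDet (isUnit_iff_ne_zero.mpr hSdet)
  set M := R * S⁻¹ with hMdef
  have hMt : M.BlockTriangular id := hR.mul (blockTriangular_inv_of_blockTriangular hS)
  have h1 : S * S⁻¹ = 1 := mul_inv_of_invertible S
  have hMM : Mᵀ * M = 1 := by
    have e1 : Mᵀ * M = (S⁻¹)ᵀ * Sᵀ * (S * S⁻¹) := by
      simp only [hMdef, transpose_mul, Matrix.mul_assoc]
      rw [← Matrix.mul_assoc Rᵀ R, h, Matrix.mul_assoc]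
    rw [← transpose_mul, h1, transpose_one, Matrix.one_mul] at e1
    rw [e1]
  haveI : Invertible M := invertibleOfLeftInverse M Mᵀ hMM
  have hMinv : M⁻¹ = Mᵀ := inv_eq_left_inv hMM
  have hMtT : Mᵀ.BlockTriangular id := by
    rw [← hMinv]; exact blockTriangular_inv_of_blockTriangular hMt
  have hdiag : ∀ i j, i ≠ j → M i j = 0 := by
    intro i j hij
    rcases lt_or_gt_of_ne hij with hlt | hgt
    · exact hMtT hlt
    · exact hMt hgt
  have hRMS : R = M * S := by
    rw [hMdef, Matrix.inv_mul_cancel_right_of_invertible]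
  have hdiagval : ∀ i, R i i = M i i * S i i := by
    intro i
    rw [hRMS, Matrix.mul_apply]
    rw [Finset.sum_eq_single i]
    · intro b _ hb; rw [hdiag i b (Ne.symm hb), zero_mul]
    · intro hb; exact absurd (Finset.mem_univ i) hb
  have hMpos : ∀ i, 0 < M i i := by
    intro i
    have := hdiagval i
    have hs := hSd i
    nlinarith [hRd i]
  have hMsq : ∀ i, M i i * M i i = 1 := by
    intro i
    have := congrArg (fun A => A i i) hMM
    simp only [Matrix.mul_apply, Matrix.one_apply_eq, transpose_apply] at this
    rw [Finset.sum_eq_single i] at this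
    · exact this
    · intro b _ hb; rw [hdiag b i hb, zero_mul]
    · intro hb; exact absurd (Finset.mem_univ i) hb
  have hM1 : M = 1 := by
    ext i j
    by_cases hij : i = j
    · subst hij
      have h2 := hMsq i
      have h3 := hMpos i
      have : M i i = 1 := by nlinarith
      simp [this]
    · rw [hdiag i j hij, Matrix.one_apply_ne hij]
  rw [hRMS, hM1, Matrix.one_mul]

lemma pd_det_ne_zero {k : ℕ} (a : Matrix (Fin k) (Fin k) ℝ)
    (ha : ∀ x : Fin k → ℝ, x ≠ 0 → 0 < x ⬝ᵥ a.mulVec x) : a.det ≠ 0 := by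
  intro h
  obtain ⟨v, hv, hva⟩ := (Matrix.exists_mulVec_eq_zero_iff).mpr h
  have := ha v hv
  rw [hva, dotProduct_zero] at this
  exact lt_irrefl 0 this

/-- The Cholesky factorization map, sending a positive definite symmetric matrix
A ∈ ℝ^{k×k} to the unique upper triangular R with positive diagonal entries such that
A = Rᵀ R, is continuous on the set of positive definite matrices. -/
theorem cholesky_continuous (k : ℕ) (hk : 0 < k)
    (F : Matrix (Fin k) (Fin k) ℝ → Matrix (Fin k) (Fin k) ℝ)
    (hF : ∀ A : Matrix (Fin k) (Fin k) ℝ, A.IsSymm → (∀ x : Fin k → ℝ, x ≠ 0 → 0 < x ⬝ᵥ A.mulVec x) →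
      (∀ i j : Fin k, (j : ℕ) < (i : ℕ) → F A i j = 0) ∧
      (∀ i : Fin k, 0 < F A i i) ∧
      A = (F A)ᵀ * F A) :
    ContinuousOn F {A : Matrix (Fin k) (Fin k) ℝ |
      A.IsSymm ∧ ∀ x : Fin k → ℝ, x ≠ 0 → 0 < x ⬝ᵥ A.mulVec x} := by
  set s : Set (Matrix (Fin k) (Fin k) ℝ) :=
    {A : Matrix (Fin k) (Fin k) ℝ |
      A.IsSymm ∧ ∀ x : Fin k → ℝ, x ≠ 0 → 0 < x ⬝ᵥ A.mulVec x} with hs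
  intro a ha
  obtain ⟨haS, haPD⟩ := ha
  obtain ⟨hFat, hFad, hFaeq⟩ := hF a haS haPD
  have key : ∀ y : ℕ → Matrix (Fin k) (Fin k) ℝ, (∀ n, y n ∈ s) →
      Tendsto y atTop (𝓝 a) → Tendsto (fun n => F (y n)) atTop (𝓝 (F a)) := by
    intro y hy hya
    obtain ⟨C0, hC0⟩ : ∃ C0 : ℝ, ∀ n, ‖y n‖ ≤ C0 := by
      obtain ⟨C0, hC0⟩ := (hya.norm).bddAbove_range
      exact ⟨C0, fun n => hC0 ⟨n, rfl⟩⟩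
    have hgfact : ∀ n, (∀ i j : Fin k, (j : ℕ) < (i : ℕ) → F (y n) i j = 0) ∧
        (∀ i, 0 < F (y n) i i) ∧ y n = (F (y n))ᵀ * F (y n) :=
      fun n => hF (y n) (hy n).1 (hy n).2
    have hgb : ∀ n, F (y n) ∈ Metric.closedBall (0 : Matrix (Fin k) (Fin k) ℝ)
        (Real.sqrt C0) := by
      intro n
      rw [Metric.mem_closedBall, dist_zero_right,
        Matrix.norm_le_iff (Real.sqrt_nonneg _)]
      intro i j
      have hsum : (F (y n) i j) ^ 2 ≤ y n j j := by
        have he := (hgfact n).2.2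
        have hyd : y n j j = ∑ l, F (y n) l j * F (y n) l j := by
          conv_lhs => rw [he]
          rw [Matrix.mul_apply]
          simp only [Matrix.transpose_apply]
        rw [hyd, pow_two]
        exact Finset.single_le_sum (f := fun l => F (y n) l j * F (y n) l j)
          (fun l _ => mul_self_nonneg _) (Finset.mem_univ i)
      have hyjj : y n j j ≤ C0 :=
        le_trans (le_trans (le_abs_self _)
          (Matrix.norm_entry_le_entrywise_sup_norm (y n))) (hC0 n)
      have habs : |F (y n) i j| ≤ Real.sqrt C0 := by
        rw [← Real.sqrt_sq_eq_abs]
        exact Real.sqrt_le_sqrt (hsum.trans hyjj)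
      simpa [Real.norm_eq_abs] using habs
    apply tendsto_of_subseq_tendsto
    intro ns hns
    obtain ⟨R, -, φ, hφ, hRlim⟩ := tendsto_subseq_of_bounded
      Metric.isBounded_closedBall (fun n => hgb (ns n))
    refine ⟨φ, ?_⟩
    have hnsφ : Tendsto (fun n => ns (φ n)) atTop atTop := hns.comp hφ.tendsto_atTop
    have hyconv : Tendsto (fun n => y (ns (φ n))) atTop (𝓝 a) := hya.comp hnsφ
    have hcont : Continuous fun M : Matrix (Fin k) (Fin k) ℝ => Mᵀ * M :=
      (continuous_id.matrix_transpose).matrix_mul continuous_id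
    have hmul : Tendsto (fun n => (F (y (ns (φ n))))ᵀ * F (y (ns (φ n)))) atTop
        (𝓝 (Rᵀ * R)) := (hcont.tendsto R).comp hRlim
    have hmul' : Tendsto (fun n => (F (y (ns (φ n))))ᵀ * F (y (ns (φ n)))) atTop (𝓝 a) := by
      have heq : (fun n => (F (y (ns (φ n))))ᵀ * F (y (ns (φ n)))) =
          fun n => y (ns (φ n)) := by
        funext n; exact ((hgfact (ns (φ n))).2.2).symm
      rw [heq]; exact hyconv
    have hRR : Rᵀ * R = a := tendsto_nhds_unique hmul hmul'
    have hentry : ∀ i j : Fin k, Tendsto (fun n => F (y (ns (φ n))) i j) atTop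
        (𝓝 (R i j)) := by
      intro i j
      have hc : Continuous fun M : Matrix (Fin k) (Fin k) ℝ => M i j :=
        (continuous_apply j).comp (continuous_apply i)
      exact (hc.tendsto R).comp hRlim
    have hRt : R.BlockTriangular id := by
      intro i j hij
      have h0 : ∀ n, F (y (ns (φ n))) i j = 0 := fun n => (hgfact (ns (φ n))).1 i j hij
      have h1 := hentry i j
      simp only [h0] at h1
      exact tendsto_nhds_unique h1 tendsto_const_nhds
    have hRd0 : ∀ i, (0 : ℝ) ≤ R i i := fun i =>
      ge_of_tendsto' (hentry i i) (fun n => le_of_lt ((hgfact (ns (φ n))).2.1 i))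
    have hadet : a.det ≠ 0 := pd_det_ne_zero a haPD
    have hRdet : R.det ≠ 0 := by
      intro h0
      apply hadet
      rw [← hRR, Matrix.det_mul, Matrix.det_transpose, h0, mul_zero]
    have hRd : ∀ i, 0 < R i i := by
      intro i
      rcases (hRd0 i).lt_or_eq with h | h
      · exact h
      · exfalso; apply hRdet
        rw [det_of_upperTriangular hRt]
        exact Finset.prod_eq_zero (Finset.mem_univ i) h.symm
    have hFat' : (F a).BlockTriangular id := fun i j hij => hFat i j hij
    have hReq : R = F a :=
      cholesky_unique R (F a) hRt hFat' hRd hFad (hRR.trans hFaeq)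
    rw [← hReq]
    exact hRlim
  show Tendsto F (𝓝[s] a) (𝓝 (F a))
  haveI : (𝓝 a).IsCountablyGenerated := (Metric.nhds_basis_ball_inv_nat_succ (x := a)).isCountablyGenerated
  apply tendsto_of_subseq_tendsto
  intro ns hns
  have hmem : ∀ᶠ n in atTop, ns n ∈ s := hns.eventually eventually_mem_nhdsWithin
  obtain ⟨N, hN⟩ := eventually_atTop.mp hmem
  have hns' : Tendsto ns atTop (𝓝 a) := hns.mono_right nhdsWithin_le_nhds
  refine ⟨fun n => n + N, ?_⟩
  exact key (fun n => ns (n + N)) (fun n => hN (n + N) (Nat.le_add_left N n))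
    (hns'.comp (tendsto_add_atTop_nat N))
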